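/- Let (H,R) be quasi-triangular, A a left H-module algebra, and F a normalized cocycle twist. If A is braided commutative with respect to R (i.e. a·b = (R₂ ▷ b)·(R₁ ▷ a)), then the twisted algebra A_F with product a ⋆_F b = (F̄₁ ▷ a)·(F̄₂ ▷ b) is braided commutative with respect to the twisted R-matrix R^F = F₂₁RF⁻¹, i.e. a ⋆_F b = (R^F₂ ▷ b) ⋆_F (R^F₁ ▷ a). -/
import Mathlib


open TensorProduct

/-- Embedding of `H ⊗ H` into the first and second factors of `H ⊗ H ⊗ H`. -/
noncomputable def leg12 (K H : Type) [CommRing K] [Ring H] [Algebra K H] :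
    H ⊗[K] H →ₐ[K] H ⊗[K] (H ⊗[K] H) :=
  Algebra.TensorProduct.map (AlgHom.id K H) Algebra.TensorProduct.includeLeft

/-- Embedding of `H ⊗ H` into the second and third factors of `H ⊗ H ⊗ H`. -/
noncomputable def leg23 (K H : Type) [CommRing K] [Ring H] [Algebra K H] :
    H ⊗[K] H →ₐ[K] H ⊗[K] (H ⊗[K] H) :=
  Algebra.TensorProduct.includeRight

/-- Embedding of `H ⊗ H` into the first and third factors of `H ⊗ H ⊗ H`. -/
noncomputable def leg13 (K H : Type) [CommRing K] [Ring H] [Algebra K H] :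
    H ⊗[K] H →ₐ[K] H ⊗[K] (H ⊗[K] H) :=
  Algebra.TensorProduct.map (AlgHom.id K H) Algebra.TensorProduct.includeRight

/-- `Δ ⊗ id` as a map `H ⊗ H → H ⊗ (H ⊗ H)`. -/
noncomputable def copL (K H : Type) [CommRing K] [Ring H] [Bialgebra K H] :
    H ⊗[K] H →ₗ[K] H ⊗[K] (H ⊗[K] H) :=
  (TensorProduct.assoc K H H H).toLinearMap ∘ₗ
    TensorProduct.map Coalgebra.comul LinearMap.id

/-- `id ⊗ Δ` as a map `H ⊗ H → H ⊗ (H ⊗ H)`. -/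
noncomputable def copR (K H : Type) [CommRing K] [Ring H] [Bialgebra K H] :
    H ⊗[K] H →ₗ[K] H ⊗[K] (H ⊗[K] H) :=
  TensorProduct.map LinearMap.id Coalgebra.comul

/-- `ε ⊗ id : H ⊗ H → H`. -/
noncomputable def ctL (K H : Type) [CommRing K] [Ring H] [Bialgebra K H] :
    H ⊗[K] H →ₗ[K] H :=
  (TensorProduct.lid K H).toLinearMap ∘ₗ TensorProduct.map Coalgebra.counit LinearMap.id

/-- `id ⊗ ε : H ⊗ H → H`. -/
noncomputable def ctR (K H : Type) [CommRing K] [Ring H] [Bialgebra K H] :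
    H ⊗[K] H →ₗ[K] H :=
  (TensorProduct.rid K H).toLinearMap ∘ₗ TensorProduct.map LinearMap.id Coalgebra.counit
/-- The twisted star product `a ⋆_F b = (F̄₁ ▷ a) · (F̄₂ ▷ b)` determined by the
action `act` and the inverse twist `Finv`. -/
noncomputable def starF {K H A : Type} [CommRing K] [Ring H] [Bialgebra K H]
    [Ring A] [Algebra K A]
    (act : H →ₗ[K] A →ₗ[K] A) (Finv : H ⊗[K] H) (a b : A) : A :=
  LinearMap.mul' K A ((TensorProduct.map (act.flip a) (act.flip b)) Finv)

/-- For `G = Σ G₁ ⊗ G₂ ∈ H ⊗ H`, the element `Σ (G₂ ▷ a) ⊗ G₁` of `A ⊗ H`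
(e.g. the target map `t(a) = (R₂ ▷ a) ⋊ R₁` of the smash product bialgebroid). -/
noncomputable def tmap {K H A : Type} [CommRing K] [Ring H] [Bialgebra K H]
    [Ring A] [Algebra K A]
    (act : H →ₗ[K] A →ₗ[K] A) (a : A) (G : H ⊗[K] H) : A ⊗[K] H :=
  (TensorProduct.comm K H A) ((TensorProduct.map LinearMap.id (act.flip a)) G)

/-- The bialgebroid counit `ε̃(a ⋊ L) = ε(L) a` of the smash product `A ⋊ H`. -/
noncomputable def epsSm (K H A : Type) [CommRing K] [Ring H] [Bialgebra K H]
    [Ring A] [Algebra K A] : A ⊗[K] H →ₗ[K] A :=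
  (TensorProduct.rid K A).toLinearMap ∘ₗ TensorProduct.map LinearMap.id Coalgebra.counit

/-- Every element of a tensor product is a finite sum of pure tensors,
indexed by `Fin n`. -/
theorem exists_fin_repr {K M N : Type} [CommRing K] [AddCommGroup M] [Module K M]
    [AddCommGroup N] [Module K N] (x : M ⊗[K] N) :
    ∃ (n : ℕ) (f : Fin n → M) (g : Fin n → N), x = ∑ i, f i ⊗ₜ[K] g i := by
  induction x with
  | zero => exact ⟨0, ![], ![], by simp⟩
  | tmul m n => exact ⟨1, ![m], ![n], by simp⟩
  | add p q hp hq =>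
    obtain ⟨n, f, g, hp⟩ := hp
    obtain ⟨m, f', g', hq⟩ := hq
    refine ⟨n + m, Fin.append f f', Fin.append g g', ?_⟩
    rw [hp, hq, Fin.sum_univ_add]
    simp [Fin.append_left, Fin.append_right]

/-- The bilinear evaluation `L(a,b)(G) = m ((act ⊗ act)(G)(a ⊗ b))`. -/
noncomputable def Lmap {K H A : Type} [CommRing K] [Ring H] [Bialgebra K H]
    [Ring A] [Algebra K A] (act : H →ₗ[K] A →ₗ[K] A) (a b : A) :
    H ⊗[K] H →ₗ[K] A :=
  LinearMap.mul' K A ∘ₗ TensorProduct.map (act.flip a) (act.flip b)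

theorem Lmap_tmul {K H A : Type} [CommRing K] [Ring H] [Bialgebra K H]
    [Ring A] [Algebra K A] (act : H →ₗ[K] A →ₗ[K] A) (a b : A) (x y : H) :
    Lmap act a b (x ⊗ₜ[K] y) = act x a * act y b := rfl

theorem starF_eq_Lmap {K H A : Type} [CommRing K] [Ring H] [Bialgebra K H]
    [Ring A] [Algebra K A] (act : H →ₗ[K] A →ₗ[K] A) (G : H ⊗[K] H) (a b : A) :
    starF act G a b = Lmap act a b G := rfl

theorem Lmap_mul_tmul {K H A : Type} [CommRing K] [Ring H] [Bialgebra K H]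
    [Ring A] [Algebra K A] (act : H →ₗ[K] A →ₗ[K] A)
    (hact_mul : ∀ (L J : H) (a : A), act (L * J) a = act L (act J a))
    (u v : H) (a b : A) (G : H ⊗[K] H) :
    Lmap act a b (G * (u ⊗ₜ[K] v)) = Lmap act (act u a) (act v b) G := by
  induction G with
  | zero => simp
  | tmul x y =>
      simp [Algebra.TensorProduct.tmul_mul_tmul, Lmap_tmul, hact_mul]
  | add p q hp hq => rw [add_mul, map_add, map_add, hp, hq]

theorem Lmap_braid {K H A : Type} [CommRing K] [Ring H] [Bialgebra K H]
    [Ring A] [Algebra K A] (act : H →ₗ[K] A →ₗ[K] A)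
    (hact_mul : ∀ (L J : H) (a : A), act (L * J) a = act L (act J a))
    (R : H ⊗[K] H)
    (hbr : ∀ (a b : A) (n : ℕ) (r1 r2 : Fin n → H),
      R = ∑ i, r1 i ⊗ₜ[K] r2 i → a * b = ∑ i, act (r2 i) b * act (r1 i) a)
    (a b : A) (G : H ⊗[K] H) :
    Lmap act a b G =
      Lmap act b a ((Algebra.TensorProduct.comm K H H) R *
        (Algebra.TensorProduct.comm K H H) G) := by
  induction G with
  | zero => simp
  | tmul x y =>
      obtain ⟨n, r1, r2, hR⟩ := exists_fin_repr (K := K) R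
      rw [Lmap_tmul, hbr (act x a) (act y b) n r1 r2 hR, hR]
      rw [map_sum, Algebra.TensorProduct.comm_tmul, Finset.sum_mul]
      simp only [Algebra.TensorProduct.comm_tmul,
        Algebra.TensorProduct.tmul_mul_tmul]
      rw [map_sum]
      refine Finset.sum_congr rfl fun i _ => ?_
      rw [Lmap_tmul, hact_mul, hact_mul]
  | add p q hp hq => rw [map_add, map_add, mul_add, map_add, hp, hq]

/-- if `A` is braided commutative w.r.t. `R`, then the twisted
algebra `A_F` is braided commutative w.r.t. `R^F = F₂₁ R F⁻¹`:
`a ⋆_F b = (R^F₂ ▷ b) ⋆_F (R^F₁ ▷ a)`. -/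
theorem twisted_algebra_braided_commutative
    {K H A : Type} [CommRing K] [Ring H] [Bialgebra K H] [Ring A] [Algebra K A]
    (act : H →ₗ[K] A →ₗ[K] A)
    (hact_one : ∀ a : A, act 1 a = a)
    (hact_mul : ∀ (L J : H) (a : A), act (L * J) a = act L (act J a))
    (hact_unit : ∀ L : H, act L (1 : A) = Coalgebra.counit (R := K) L • (1 : A))
    (hact_alg : ∀ (L : H) (a b : A) (n : ℕ) (L1 L2 : Fin n → H),
      Coalgebra.comul (R := K) L = ∑ i, L1 i ⊗ₜ[K] L2 i →
      act L (a * b) = ∑ i, act (L1 i) a * act (L2 i) b)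
    -- quasi-triangularity of (H, R)
    (R Rinv : H ⊗[K] H)
    (hR₁ : R * Rinv = 1) (hR₂ : Rinv * R = 1)
    (hRΔ : ∀ x : H,
      R * Coalgebra.comul (R := K) x * Rinv =
        TensorProduct.comm K H H (Coalgebra.comul (R := K) x))
    (hhex₁ : copL K H R = leg13 K H R * leg23 K H R)
    (hhex₂ : copR K H R = leg13 K H R * leg12 K H R)
    -- A is braided commutative w.r.t. R
    (hbr : ∀ (a b : A) (n : ℕ) (r1 r2 : Fin n → H),
      R = ∑ i, r1 i ⊗ₜ[K] r2 i → a * b = ∑ i, act (r2 i) b * act (r1 i) a)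
    -- F is a normalized cocycle twist
    (F Finv : H ⊗[K] H)
    (hinv₁ : F * Finv = 1) (hinv₂ : Finv * F = 1)
    (hcoc : leg12 K H F * copL K H F = leg23 K H F * copR K H F)
    (hnorm₁ : ctL K H F = 1) (hnorm₂ : ctR K H F = 1) :
    -- A_F is braided commutative w.r.t. R^F = F₂₁ R F⁻¹
    ∀ (a b : A) (n : ℕ) (r1 r2 : Fin n → H),
      TensorProduct.comm K H H F * R * Finv = ∑ i, r1 i ⊗ₜ[K] r2 i →
      starF act Finv a b = ∑ i, starF act Finv (act (r2 i) b) (act (r1 i) a) := by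
  intro a b n r1 r2 hS
  set τ := Algebra.TensorProduct.comm K H H with hτdef
  have hττ : ∀ x : H ⊗[K] H, τ (τ x) = x := by
    intro x
    induction x with
    | zero => simp
    | tmul u v => simp [hτdef, Algebra.TensorProduct.comm_tmul]
    | add p q hp hq => rw [map_add, map_add, hp, hq]
  -- rewrite the RHS
  have hRHS : ∀ i, starF act Finv (act (r2 i) b) (act (r1 i) a) =
      Lmap act b a (Finv * (r2 i ⊗ₜ[K] r1 i)) := by
    intro i
    rw [starF_eq_Lmap, ← Lmap_mul_tmul act hact_mul]
  calc starF act Finv a b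
      = Lmap act a b Finv := starF_eq_Lmap act Finv a b
    _ = Lmap act b a (τ R * τ Finv) := Lmap_braid act hact_mul R hbr a b Finv
    _ = Lmap act b a (Finv * τ (∑ i, r1 i ⊗ₜ[K] r2 i)) := by
        congr 1
        rw [← hS]
        have hcomm : (TensorProduct.comm K H H) F = τ F := rfl
        rw [hcomm, map_mul, map_mul, hττ, ← mul_assoc, ← mul_assoc, hinv₂, one_mul]
    _ = ∑ i, Lmap act b a (Finv * (r2 i ⊗ₜ[K] r1 i)) := by
        rw [map_sum]
        simp only [hτdef, Algebra.TensorProduct.comm_tmul]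
        rw [Finset.mul_sum, map_sum]
    _ = ∑ i, starF act Finv (act (r2 i) b) (act (r1 i) a) := by
        simp only [hRHS]
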